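/- Under the ideal setup (V = Θ̃ Π Θ̃(I,I)^{-1} V(I,:), V'V = I_K, Π a rank-K membership matrix with pure index tuple I so Π(I,:) = I_K, Θ̃ diagonal positive, every row of V nonzero, V(I,:) invertible), set S_C = V_{*,1}(I,:), b = 1/√(𝟏'(S_C S_C')^{-1}𝟏) and w = b^{-1} · S_C' (S_C S_C')^{-1}𝟏 / (𝟏'(S_C S_C')^{-1}𝟏). Then for every i ∈ {1,…,n}: if node i is pure (Π(i,k) = 1 for some k) then V_{*,1}(i,:)·w = b, and if node i is not pure then V_{*,1}(i,:)·w ≠ b. -/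

import Mathlib

open Matrix

/-- The Euclidean norm of a row vector. -/
noncomputable def rnorm {m : ℕ} (v : Fin m → ℝ) : ℝ := Real.sqrt (∑ j, v j ^ 2)

/-- Row-wise ℓ₂-normalization of a matrix. -/
noncomputable def rowNormalize {n m : ℕ} (V : Matrix (Fin n) (Fin m) ℝ) :
    Matrix (Fin n) (Fin m) ℝ :=
  Matrix.of fun i j => V i j / rnorm (V i)

lemma rnorm_eq_norm {m : ℕ} (v : Fin m → ℝ) :
    rnorm v = ‖(WithLp.linearEquiv 2 ℝ (Fin m → ℝ)).symm v‖ := by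
  rw [EuclideanSpace.norm_eq]
  simp [rnorm, Real.norm_eq_abs, sq_abs]

lemma rnorm_nonneg {m : ℕ} (v : Fin m → ℝ) : 0 ≤ rnorm v := Real.sqrt_nonneg _

lemma rnorm_pos {m : ℕ} {v : Fin m → ℝ} (h : v ≠ 0) : 0 < rnorm v := by
  apply Real.sqrt_pos.2
  obtain ⟨j, hj⟩ := Function.ne_iff.1 h
  have hj' : (0:ℝ) < v j ^ 2 := by
    have : v j ≠ 0 := hj
    positivity
  exact Finset.sum_pos' (fun k _ => sq_nonneg _) ⟨j, Finset.mem_univ j, hj'⟩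

lemma rnorm_smul {m : ℕ} (c : ℝ) (hc : 0 ≤ c) (v : Fin m → ℝ) :
    rnorm (c • v) = c * rnorm v := by
  unfold rnorm
  rw [← Real.sqrt_sq hc, ← Real.sqrt_mul (sq_nonneg c), Finset.mul_sum, Real.sqrt_sq hc]
  congr 2
  funext j
  simp [mul_pow]

lemma rnorm_combo_lt {K : ℕ} (s : Fin K → (Fin K → ℝ)) (hs : ∀ k, rnorm (s k) = 1)
    (a : Fin K → ℝ) (ha : ∀ k, 0 ≤ a k) {k₁ k₂ : Fin K} (hne : k₁ ≠ k₂)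
    (h1 : 0 < a k₁) (h2 : 0 < a k₂) (hss : s k₁ ≠ s k₂) :
    rnorm (∑ k, a k • s k) < ∑ k, a k := by
  set L := (WithLp.linearEquiv 2 ℝ (Fin K → ℝ)).symm with hL
  set t : Fin K → EuclideanSpace ℝ (Fin K) := fun k => L (s k) with ht
  have hts : ∀ k, ‖t k‖ = 1 := fun k => by rw [ht, ← rnorm_eq_norm, hs]
  have himg : rnorm (∑ k, a k • s k) = ‖∑ k, a k • t k‖ := by
    rw [rnorm_eq_norm, map_sum]
    rfl
  rw [himg]
  have hk2mem : k₂ ∈ (Finset.univ.erase k₁) :=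
    Finset.mem_erase.2 ⟨hne.symm, Finset.mem_univ _⟩
  set T := (Finset.univ.erase k₁).erase k₂ with hT
  have hsplitE : ∑ k, a k • t k = (a k₁ • t k₁ + a k₂ • t k₂) + ∑ k ∈ T, a k • t k := by
    rw [← Finset.add_sum_erase _ _ (Finset.mem_univ k₁),
      ← Finset.add_sum_erase _ _ hk2mem, add_assoc]
  have hsplitR : ∑ k, a k = (a k₁ + a k₂) + ∑ k ∈ T, a k := by
    rw [← Finset.add_sum_erase _ _ (Finset.mem_univ k₁),
      ← Finset.add_sum_erase _ _ hk2mem, add_assoc]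
  rw [hsplitE, hsplitR]
  have htne : t k₁ ≠ t k₂ := fun h => hss (L.injective h)
  have hray : ¬ SameRay ℝ (a k₁ • t k₁) (a k₂ • t k₂) := by
    intro h
    have := h.norm_smul_eq
    rw [norm_smul, norm_smul, Real.norm_eq_abs, Real.norm_eq_abs,
      abs_of_pos h1, abs_of_pos h2, hts, hts, mul_one, mul_one,
      smul_smul, smul_smul, mul_comm (a k₁) (a k₂)] at this
    exact htne ((smul_right_injective _ (by positivity : a k₂ * a k₁ ≠ 0)) this).symm
  have hmain : ‖a k₁ • t k₁ + a k₂ • t k₂‖ < a k₁ + a k₂ := by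
    have := norm_add_lt_of_not_sameRay hray
    rwa [norm_smul, norm_smul, Real.norm_eq_abs, Real.norm_eq_abs,
      abs_of_pos h1, abs_of_pos h2, hts, hts, mul_one, mul_one] at this
  have hrest : ‖∑ k ∈ T, a k • t k‖ ≤ ∑ k ∈ T, a k := by
    refine (norm_sum_le _ _).trans ?_
    apply Finset.sum_le_sum
    intro k _
    rw [norm_smul, Real.norm_eq_abs, abs_of_nonneg (ha k), hts, mul_one]
  calc ‖(a k₁ • t k₁ + a k₂ • t k₂) + ∑ k ∈ T, a k • t k‖
      ≤ ‖a k₁ • t k₁ + a k₂ • t k₂‖ + ‖∑ k ∈ T, a k • t k‖ := norm_add_le _ _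
    _ < (a k₁ + a k₂) + ∑ k ∈ T, a k := add_lt_add_of_lt_of_le hmain hrest

/-- **one-class SVM separates pure from mixed nodes.** Under the ideal setup,
with `S_C = V₊(I,:)`, `b = 1/√(𝟏'(S_C S_C')⁻¹𝟏)` and
`w = b⁻¹ · S_C' (S_C S_C')⁻¹𝟏 / (𝟏'(S_C S_C')⁻¹𝟏)`, a node `i` is pure
(`Π(i,k) = 1` for some `k`) if and only if `V₊(i,:)·w = b`: pure nodes attain equality and
non-pure nodes do not. -/
theorem svm_hyperplane_characterizes_pure_nodes {n K : ℕ} (hK : 1 ≤ K) (hKn : K ≤ n)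
    (Pim : Matrix (Fin n) (Fin K) ℝ)
    (hnonneg : ∀ i k, 0 ≤ Pim i k)
    (hrowsum : ∀ i, ∑ k, Pim i k = 1)
    (hrank : Pim.rank = K)
    (I : Fin K → Fin n)
    (hpure : ∀ k l, Pim (I k) l = if l = k then (1 : ℝ) else 0)
    (θ : Fin n → ℝ) (hθ : ∀ i, 0 < θ i)
    (V : Matrix (Fin n) (Fin K) ℝ)
    (hVorth : Vᵀ * V = 1)
    (hVdef : V = Matrix.diagonal θ * Pim *
      (Matrix.diagonal (fun k => (θ (I k))⁻¹) * V.submatrix I id))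
    (hrows : ∀ i, V i ≠ 0)
    (hVI : IsUnit (V.submatrix I id)) :
    let Sc := (rowNormalize V).submatrix I id
    let u := (Sc * Scᵀ)⁻¹ *ᵥ fun _ => (1 : ℝ)
    let b := (Real.sqrt (∑ k, u k))⁻¹
    let w := b⁻¹ • ((∑ k, u k)⁻¹ • (Scᵀ *ᵥ u))
    ∀ i : Fin n,
      ((∃ k, Pim i k = 1) → dotProduct (rowNormalize V i) w = b) ∧
      ((¬ ∃ k, Pim i k = 1) → dotProduct (rowNormalize V i) w ≠ b) := by
  intro Sc u b w i
  have hu : u = (Sc * Scᵀ)⁻¹ *ᵥ (fun _ => (1:ℝ)) := rfl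
  have hb : b = (Real.sqrt (∑ k, u k))⁻¹ := rfl
  have hw : w = b⁻¹ • ((∑ k, u k)⁻¹ • (Scᵀ *ᵥ u)) := rfl
  set N : Fin n → ℝ := fun j => rnorm (V j) with hNdef
  have hN : ∀ j, 0 < N j := fun j => rnorm_pos (hrows j)
  have hR : ∀ j, rowNormalize V j = (N j)⁻¹ • V j := by
    intro j; funext l
    simp [rowNormalize, hNdef, div_eq_inv_mul]
  have hScrow : ∀ k, Sc k = (N (I k))⁻¹ • V (I k) := fun k => hR (I k)
  have hVIk : ∀ k, V (I k) = N (I k) • Sc k := by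
    intro k
    rw [hScrow k, smul_smul, mul_inv_cancel₀ (hN (I k)).ne', one_smul]
  have hScnorm : ∀ k, rnorm (Sc k) = 1 := by
    intro k
    rw [hScrow, rnorm_smul _ (inv_nonneg.2 (hN (I k)).le), inv_mul_cancel₀ (hN (I k)).ne']
  -- Sc is invertible
  have hScU : IsUnit Sc := by
    have hfac : Sc = Matrix.diagonal (fun k => (N (I k))⁻¹) * V.submatrix I id := by
      ext k j
      rw [Matrix.diagonal_mul]
      simp [rowNormalize, hNdef, div_eq_inv_mul, Sc]
    rw [hfac]
    refine IsUnit.mul ?_ hVI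
    rw [Matrix.isUnit_iff_isUnit_det, Matrix.det_diagonal]
    exact (Finset.prod_ne_zero_iff.2 fun k _ => inv_ne_zero (hN (I k)).ne').isUnit
  have hScdist : ∀ k₁ k₂, k₁ ≠ k₂ → Sc k₁ ≠ Sc k₂ := by
    intro k₁ k₂ hk h
    have hdet0 : Sc.det = 0 := Matrix.det_zero_of_row_eq hk h
    have := (Matrix.isUnit_iff_isUnit_det _).1 hScU
    rw [hdet0] at this
    exact not_isUnit_zero this
  -- decomposition of rows
  set a : Fin n → Fin K → ℝ := fun j k => Pim j k * ((θ (I k))⁻¹ * N (I k)) with hadef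
  have ha_nonneg : ∀ j k, 0 ≤ a j k := fun j k =>
    mul_nonneg (hnonneg j k) (mul_nonneg (inv_nonneg.2 (hθ _).le) (hN _).le)
  set x : Fin n → Fin K → ℝ := fun j => ∑ k, a j k • Sc k with hxdef
  have hVx : ∀ j, V j = θ j • x j := by
    intro j; funext l
    have h1 : V j l = ∑ k, (θ j * Pim j k) * ((θ (I k))⁻¹ * V (I k) l) := by
      conv_lhs => rw [hVdef]
      rw [Matrix.mul_apply]
      refine Finset.sum_congr rfl fun k _ => ?_
      rw [Matrix.diagonal_mul, Matrix.diagonal_mul, Matrix.submatrix_apply]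
      rfl
    rw [h1]
    simp only [Pi.smul_apply, hxdef, Finset.sum_apply, smul_eq_mul, Finset.mul_sum]
    refine Finset.sum_congr rfl fun k _ => ?_
    have h2 : V (I k) l = N (I k) * Sc k l := by
      rw [hVIk k]; rfl
    rw [h2, hadef]
    ring
  have hNx : ∀ j, N j = θ j * rnorm (x j) := by
    intro j
    have : N j = rnorm (V j) := rfl
    rw [this, hVx j, rnorm_smul _ (hθ j).le]
  have hxpos : ∀ j, 0 < rnorm (x j) := by
    intro j
    have h0 := hN j
    rw [hNx j] at h0
    rcases (rnorm_nonneg (x j)).lt_or_eq with h | h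
    · exact h
    · rw [← h, mul_zero] at h0; exact absurd h0 (lt_irrefl 0)
  -- positive definiteness
  have hMpd : (Sc * Scᵀ).PosDef := by
    refine Matrix.posDef_iff_dotProduct_mulVec.2 ⟨?_, ?_⟩
    · rw [Matrix.IsHermitian, Matrix.conjTranspose_eq_transpose_of_trivial,
        Matrix.transpose_mul, Matrix.transpose_transpose]
    · intro y hy
      have hU : IsUnit Scᵀ := by
        rw [Matrix.isUnit_iff_isUnit_det, Matrix.det_transpose,
          ← Matrix.isUnit_iff_isUnit_det]
        exact hScU
      have hz : Scᵀ *ᵥ y ≠ 0 := by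
        intro h
        apply hy
        have hinj := Matrix.mulVec_injective_iff_isUnit.2 hU
        have h2 : Scᵀ *ᵥ y = Scᵀ *ᵥ 0 := by rw [h, Matrix.mulVec_zero]
        exact hinj h2
      have heq : dotProduct (star y) ((Sc * Scᵀ) *ᵥ y)
          = dotProduct (Scᵀ *ᵥ y) (Scᵀ *ᵥ y) := by
        rw [star_trivial, ← Matrix.mulVec_mulVec, Matrix.dotProduct_mulVec,
          ← Matrix.mulVec_transpose]
      rw [heq]
      have h0 : dotProduct (Scᵀ *ᵥ y) (Scᵀ *ᵥ y) ≠ 0 :=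
        fun h => hz (dotProduct_self_eq_zero.1 h)
      have h1 : 0 ≤ dotProduct (Scᵀ *ᵥ y) (Scᵀ *ᵥ y) :=
        Finset.sum_nonneg fun l _ => mul_self_nonneg _
      exact h1.lt_of_ne (Ne.symm h0)
  have hdet : IsUnit (Sc * Scᵀ).det := (Matrix.isUnit_iff_isUnit_det _).1 hMpd.isUnit
  set S := ∑ k, u k with hSdef
  have hS : 0 < S := by
    have h1 : (fun _ : Fin K => (1:ℝ)) ≠ 0 := by
      intro h
      have := congrFun h ⟨0, hK⟩
      simp at this
    have h2 := hMpd.inv.dotProduct_mulVec_pos h1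
    rw [star_trivial] at h2
    have h3 : dotProduct (fun _ : Fin K => (1:ℝ)) ((Sc * Scᵀ)⁻¹ *ᵥ fun _ => (1:ℝ)) = S := by
      rw [hSdef, hu]
      simp [dotProduct]
    rw [h3] at h2
    exact h2
  have hsqrtS : Real.sqrt S ≠ 0 := (Real.sqrt_pos.2 hS).ne'
  have hbpos : 0 < b := by rw [hb]; exact inv_pos.2 (Real.sqrt_pos.2 hS)
  -- the hyperplane property on corner rows
  have hScw : ∀ k, dotProduct (Sc k) w = b := by
    intro k
    have h1 : Sc *ᵥ (Scᵀ *ᵥ u) = (fun _ => (1:ℝ)) := by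
      rw [Matrix.mulVec_mulVec, hu, Matrix.mulVec_mulVec,
        Matrix.mul_nonsing_inv _ hdet, Matrix.one_mulVec]
    have h2 : dotProduct (Sc k) (Scᵀ *ᵥ u) = 1 := congrFun h1 k
    rw [hw, dotProduct_smul, dotProduct_smul, h2, smul_eq_mul, smul_eq_mul,
      mul_one, hb, inv_inv,
      show S⁻¹ = (Real.sqrt S * Real.sqrt S)⁻¹ by rw [Real.mul_self_sqrt hS.le],
      mul_inv, ← mul_assoc, mul_inv_cancel₀ hsqrtS, one_mul]
  -- the master dot-product formula
  have hdot : ∀ j, dotProduct (rowNormalize V j) w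
      = b * ((∑ k, a j k) / rnorm (x j)) := by
    intro j
    rw [hR j, smul_dotProduct, hVx j, smul_dotProduct]
    have hxw : dotProduct (x j) w = (∑ k, a j k) * b := by
      have hexp : dotProduct (x j) w
          = ∑ k, a j k * dotProduct (Sc k) w := by
        rw [hxdef]
        simp only [dotProduct, Finset.sum_apply, Pi.smul_apply, smul_eq_mul,
          Finset.sum_mul, Finset.mul_sum]
        rw [Finset.sum_comm]
        exact Finset.sum_congr rfl fun k _ => Finset.sum_congr rfl fun l _ => mul_assoc _ _ _
      rw [hexp]
      simp only [hScw]
      rw [← Finset.sum_mul]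
    rw [hxw, hNx j, smul_eq_mul, smul_eq_mul, mul_inv]
    have hθj := (hθ j).ne'
    have hxj := (hxpos j).ne'
    field_simp
  constructor
  · rintro ⟨k₀, hk₀⟩
    have hzero : ∀ l, l ≠ k₀ → Pim i l = 0 := by
      intro l hl
      have hsum := hrowsum i
      rw [← Finset.add_sum_erase _ _ (Finset.mem_univ k₀), hk₀] at hsum
      have h0 : ∑ l ∈ Finset.univ.erase k₀, Pim i l = 0 := by linarith
      exact (Finset.sum_eq_zero_iff_of_nonneg (fun l _ => hnonneg i l)).1 h0 l
        (Finset.mem_erase.2 ⟨hl, Finset.mem_univ _⟩)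
    have hak₀ : 0 < a i k₀ := by
      rw [hadef]
      simp only [hk₀, one_mul]
      exact mul_pos (inv_pos.2 (hθ _)) (hN _)
    have hasum : ∑ k, a i k = a i k₀ :=
      Finset.sum_eq_single _ (fun l _ hl => by simp [hadef, hzero l hl])
        (fun h => absurd (Finset.mem_univ _) h)
    have hxi : x i = a i k₀ • Sc k₀ := by
      rw [hxdef]
      exact Finset.sum_eq_single _ (fun l _ hl => by simp [hadef, hzero l hl])
        (fun h => absurd (Finset.mem_univ _) h)
    rw [hdot i, hasum, hxi, rnorm_smul _ hak₀.le, hScnorm, mul_one,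
      div_self hak₀.ne', mul_one]
  · intro hnp
    have hex : ∃ k, 0 < Pim i k := by
      by_contra h
      push_neg at h
      have hz : ∀ k, Pim i k = 0 := fun k => le_antisymm (h k) (hnonneg i k)
      have hsum := hrowsum i
      rw [Finset.sum_eq_zero (fun k _ => hz k)] at hsum
      exact zero_ne_one hsum
    obtain ⟨k₁, hk₁⟩ := hex
    have hlt : Pim i k₁ < 1 := by
      refine lt_of_le_of_ne ?_ (fun h => hnp ⟨k₁, h⟩)
      calc Pim i k₁ ≤ ∑ k, Pim i k :=
            Finset.single_le_sum (fun k _ => hnonneg i k) (Finset.mem_univ _)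
        _ = 1 := hrowsum i
    have hex2 : ∃ k₂ ∈ Finset.univ.erase k₁, 0 < Pim i k₂ := by
      by_contra h
      push_neg at h
      have hz : ∀ k ∈ Finset.univ.erase k₁, Pim i k = 0 :=
        fun k hk => le_antisymm (h k hk) (hnonneg i k)
      have hsum := hrowsum i
      rw [← Finset.add_sum_erase _ _ (Finset.mem_univ k₁), Finset.sum_eq_zero hz,
        add_zero] at hsum
      exact hlt.ne hsum
    obtain ⟨k₂, hk₂mem, hk₂⟩ := hex2
    have hne : k₁ ≠ k₂ := fun h => (Finset.mem_erase.1 hk₂mem).1 h.symm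
    have hpos : ∀ k, 0 < Pim i k → 0 < a i k := fun k hk => by
      rw [hadef]
      exact mul_pos hk (mul_pos (inv_pos.2 (hθ _)) (hN _))
    have hstrict : rnorm (x i) < ∑ k, a i k := by
      have := rnorm_combo_lt (fun k => Sc k) hScnorm (a i) (ha_nonneg i) hne
        (hpos k₁ hk₁) (hpos k₂ hk₂) (hScdist k₁ k₂ hne)
      rw [hxdef]
      exact this
    rw [hdot i]
    have hgt : 1 < (∑ k, a i k) / rnorm (x i) := (one_lt_div (hxpos i)).2 hstrict
    have hfin : b < b * ((∑ k, a i k) / rnorm (x i)) := by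
      nlinarith
    exact hfin.ne'
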